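/- Let ℓ ≥ 1 and H2 > 0 be real numbers, let r be a positive integer, and let k1, k2 be nonnegative integers with k := k1 + k2 ≥ 1. Let n_1,…,n_k be positive integers, a_1,…,a_k positive real numbers with ∑_{i=1}^k n_i·a_i = r·H2, and π_1,…,π_k real numbers such that 2·(π_i − 1)·H2 ≤ a_i² for all i, π_i ≥ ℓ + 1 for 1 ≤ i ≤ k1, and π_i ≥ 2 for k1 < i ≤ k. Then k1·√ℓ + k2 ≤ r·√(H2/2). -/

import Mathlib

/-- Arithmetic core of part (1) of Lemma 3.2: `k1·√ℓ + k2 ≤ r·√(H²/2)`. -/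
theorem stmt_3 (ℓ H2 : ℝ) (hℓ : 1 ≤ ℓ) (hH2 : 0 < H2)
    (r : ℕ) (hr : 0 < r) (k1 k2 : ℕ) (hk : 1 ≤ k1 + k2)
    (n : ℕ → ℕ) (a : ℕ → ℝ)
    (hn : ∀ i, i < k1 + k2 → 0 < n i) (ha : ∀ i, i < k1 + k2 → 0 < a i)
    (hsum : ∑ i ∈ Finset.range (k1 + k2), (n i : ℝ) * a i = (r : ℝ) * H2)
    (π : ℕ → ℝ)
    (hπ : ∀ i, i < k1 + k2 → 2 * (π i - 1) * H2 ≤ a i ^ 2)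
    (hπ1 : ∀ i, i < k1 → ℓ + 1 ≤ π i)
    (hπ2 : ∀ i, k1 ≤ i → i < k1 + k2 → 2 ≤ π i) :
    (k1 : ℝ) * Real.sqrt ℓ + (k2 : ℝ) ≤ (r : ℝ) * Real.sqrt (H2 / 2) := by
  have h2H2 : (0:ℝ) < 2 * H2 := by linarith
  have hs2 : 0 < Real.sqrt (2 * H2) := Real.sqrt_pos.mpr h2H2
  -- pointwise lower bounds
  have key : ∀ i, i < k1 + k2 → (if i < k1 then Real.sqrt ℓ * Real.sqrt (2 * H2)
      else Real.sqrt (2 * H2)) ≤ (n i : ℝ) * a i := by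
    intro i hi
    have hai := ha i hi
    have hbound : ∀ c : ℝ, 0 ≤ c → c ≤ a i ^ 2 → Real.sqrt c ≤ (n i : ℝ) * a i := by
      intro c hc hle
      have h1 : Real.sqrt c ≤ a i := by
        have := Real.sqrt_le_sqrt hle
        rwa [Real.sqrt_sq hai.le] at this
      have hn1 : (1:ℝ) ≤ (n i : ℝ) := by exact_mod_cast hn i hi
      nlinarith
    by_cases h : i < k1
    · simp only [h, if_true]
      rw [← Real.sqrt_mul (by positivity : (0:ℝ) ≤ ℓ)]
      refine hbound _ (by positivity) ?_
      have := hπ i hi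
      have := hπ1 i h
      nlinarith
    · simp only [h, if_false]
      refine hbound _ (by positivity) ?_
      have := hπ i hi
      have := hπ2 i (not_lt.mp h) hi
      nlinarith
  have hsum' : ((k1:ℝ) * Real.sqrt ℓ + k2) * Real.sqrt (2 * H2)
      ≤ (r : ℝ) * H2 := by
    rw [← hsum]
    calc ((k1:ℝ) * Real.sqrt ℓ + k2) * Real.sqrt (2 * H2)
        = ∑ i ∈ Finset.range (k1 + k2),
            (if i < k1 then Real.sqrt ℓ * Real.sqrt (2 * H2) else Real.sqrt (2 * H2)) := by
          rw [Finset.sum_ite]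
          have h1 : (Finset.range (k1 + k2)).filter (fun i => i < k1) = Finset.range k1 := by
              ext i; simp; omega
          have h2 : (Finset.range (k1 + k2)).filter (fun i => ¬ i < k1)
              = Finset.Ico k1 (k1 + k2) := by
            ext i; simp; omega
          rw [h1, h2, Finset.sum_const, Finset.sum_const, Finset.card_range,
            Nat.card_Ico]
          simp
          ring
      _ ≤ ∑ i ∈ Finset.range (k1 + k2), (n i : ℝ) * a i := by
          apply Finset.sum_le_sum
          intro i hi
          exact key i (Finset.mem_range.mp hi)
  -- conclude
  have heq : (r : ℝ) * Real.sqrt (H2 / 2) * Real.sqrt (2 * H2) = (r : ℝ) * H2 := by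
    rw [mul_assoc, ← Real.sqrt_mul (by positivity)]
    have : H2 / 2 * (2 * H2) = H2 ^ 2 := by ring
    rw [this, Real.sqrt_sq hH2.le]
  rw [← mul_le_mul_iff_of_pos_right hs2, heq]
  exact hsum'
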